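/- Let Π be a convex n-gon with area 1, vertices v₁,…,vₙ, radii r_i = |v_i − O| from the barycenter O, side lengths ℓ_i, and let Π₀ be the unit-area regular n-gon with vertices w₁,…,wₙ, radius r and side ℓ. Suppose max_i |v_i − w_i| < ε and v₁ = λ·w₁ for some λ > 0. If ρ_i is the rotation about O with ρ_i(v_i) = λ_i·w_i (λ_i > 0) with angle θ_i, then hd(∂Π, ∂Π₀) ≤ C·∑_{i=1}^n (r_i·|θ_i| + |r_i − r|) for a constant C depending only on n. -/

import Mathlib

open Real Set Finset

/-- Rotation of the plane `ℂ` about the origin by angle `θ`. -/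
noncomputable def rotBy (θ : ℝ) (z : ℂ) : ℂ := Complex.exp (θ * Complex.I) * z

section Aux

open Metric

lemma norm_exp_mul_I_sub_one_le (θ : ℝ) : ‖Complex.exp (θ * Complex.I) - 1‖ ≤ |θ| := by
  set z := Complex.exp (θ * Complex.I) - 1 with hz
  have hre : z.re = Real.cos θ - 1 := by
    simp [hz, Complex.exp_ofReal_mul_I_re]
  have him : z.im = Real.sin θ := by
    simp [hz, Complex.exp_ofReal_mul_I_im]
  have hsq : ‖z‖ ^ 2 = (Real.cos θ - 1) ^ 2 + Real.sin θ ^ 2 := by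
    rw [Complex.sq_norm, Complex.normSq_apply, hre, him]; ring
  have hcos : Real.cos θ = 1 - 2 * Real.sin (θ / 2) ^ 2 := by
    have h2 : 2 * (θ / 2) = θ := by ring
    have := Real.cos_two_mul' (θ / 2)
    rw [h2] at this
    have hpy := Real.sin_sq_add_cos_sq (θ / 2)
    nlinarith
  have hsin : Real.sin (θ / 2) ^ 2 ≤ (θ / 2) ^ 2 := by
    calc Real.sin (θ / 2) ^ 2 = |Real.sin (θ / 2)| ^ 2 := (sq_abs _).symm
      _ ≤ |θ / 2| ^ 2 := pow_le_pow_left₀ (abs_nonneg _) Real.abs_sin_le_abs 2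
      _ = (θ / 2) ^ 2 := sq_abs _
  have hsinθ := Real.sin_sq_add_cos_sq θ
  have hb : ‖z‖ ^ 2 ≤ |θ| ^ 2 := by
    rw [hsq, sq_abs]
    nlinarith
  nlinarith [norm_nonneg z, abs_nonneg θ]

lemma exists_frontier_infDist {C : Set ℂ} (hC : IsClosed C) (hne : C.Nonempty) {x : ℂ}
    (hx : x ∉ C) : ∃ y ∈ frontier C, dist x y = infDist x C := by
  obtain ⟨y, hyC, hy⟩ := hC.exists_infDist_eq_dist hne x
  refine ⟨y, ⟨subset_closure hyC, fun hyi => ?_⟩, hy.symm⟩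
  rw [mem_interior_iff_mem_nhds, Metric.mem_nhds_iff] at hyi
  obtain ⟨δ, hδ, hball⟩ := hyi
  have hxy : 0 < dist x y := dist_pos.2 (fun h => hx (h ▸ hyC))
  set t : ℝ := min (δ / (2 * dist x y)) 1 with ht
  have ht0 : 0 < t := lt_min (by positivity) one_pos
  have ht1 : t ≤ 1 := min_le_right _ _
  set z : ℂ := y + t • (x - y) with hzdef
  have hzy : z - y = t • (x - y) := by rw [hzdef]; abel
  have hxz : x - z = (1 - t) • (x - y) := by
    rw [hzdef]; rw [sub_smul, one_smul]; abel
  have hzC : z ∈ C := by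
    apply hball
    rw [mem_ball, dist_eq_norm, hzy, norm_smul, Real.norm_eq_abs, abs_of_pos ht0,
      ← dist_eq_norm]
    calc t * dist x y ≤ δ / (2 * dist x y) * dist x y := by
          exact mul_le_mul_of_nonneg_right (min_le_left _ _) dist_nonneg
      _ = δ / 2 := by field_simp
      _ < δ := by linarith
  have hlt : dist x z < dist x y := by
    rw [dist_eq_norm, hxz, norm_smul, Real.norm_eq_abs, abs_of_nonneg (by linarith),
      ← dist_eq_norm]
    nlinarith
  have := infDist_le_dist_of_mem (x := x) hzC
  linarith

lemma infDist_frontier_le_hausdorffDist {A B : Set ℂ}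
    (hA : Convex ℝ A) (hAc : IsCompact A) (hAi : (interior A).Nonempty)
    (hBc : IsCompact B) (hBne : B.Nonempty)
    (hfin : EMetric.hausdorffEdist A B ≠ ⊤) {x : ℂ} (hx : x ∈ frontier A) :
    infDist x (frontier B) ≤ hausdorffDist A B := by
  have hBcl : IsClosed B := hBc.isClosed
  have hd0 : 0 ≤ hausdorffDist A B := hausdorffDist_nonneg
  obtain ⟨R, hR⟩ : ∃ R, B ⊆ ball 0 R := (hBc.isBounded).subset_ball 0
  have hBcompl : Bᶜ.Nonempty := by
    refine ⟨((|R| + 1 : ℝ) : ℂ), fun hmem => ?_⟩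
    have := hR hmem
    rw [mem_ball, dist_zero_right] at this
    rw [Complex.norm_real, Real.norm_eq_abs, abs_of_nonneg (by positivity)] at this
    have := le_abs_self R
    linarith [abs_nonneg R]
  by_cases hxB : x ∈ interior B
  · set s := infDist x Bᶜ with hs
    have hsd : s ≤ hausdorffDist A B := by
      by_contra hcon
      push_neg at hcon
      obtain ⟨s', hds', hs's⟩ := exists_between hcon
      have hs'0 : 0 < s' := lt_of_le_of_lt hd0 hds'
      obtain ⟨f, hf⟩ := geometric_hahn_banach_open_point hA.interior isOpen_interior hx.2
      obtain ⟨a₀, ha₀⟩ := hAi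
      have hfne : f ≠ 0 := by
        intro h0
        have := hf a₀ ha₀
        rw [h0] at this
        simp at this
      have hfpos : 0 < ‖f‖ := by
        rcases (norm_nonneg f).lt_or_eq with h | h
        · exact h
        · exact absurd (ContinuousLinearMap.opNorm_zero_iff (f := f) |>.1 h.symm) hfne
      have hfle : ∀ a ∈ A, f a ≤ f x := by
        intro a ha
        by_contra hgt
        push_neg at hgt
        set t : ℝ := min (1/2) ((f a - f x) / (2 * (|f a - f a₀| + 1))) with htdef
        have ht0 : 0 < t := by
          apply lt_min (by norm_num)
          have : 0 < f a - f x := by linarith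
          positivity
        have hmem : (1 - t) • a + t • a₀ ∈ interior A :=
          hA.combo_closure_interior_mem_interior (subset_closure ha) ha₀
            (by have := min_le_left (1/2 : ℝ) ((f a - f x) / (2 * (|f a - f a₀| + 1))); linarith)
            ht0 (by ring)
        have hlt := hf _ hmem
        rw [map_add, map_smul, map_smul] at hlt
        have habs : t * |f a - f a₀| ≤ (f a - f x) / 2 := by
          have h1 : t ≤ (f a - f x) / (2 * (|f a - f a₀| + 1)) := min_le_right _ _
          have h2 : 0 ≤ |f a - f a₀| := abs_nonneg _
          have h3 : 0 < f a - f x := by linarith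
          calc t * |f a - f a₀| ≤ (f a - f x) / (2 * (|f a - f a₀| + 1)) * |f a - f a₀| :=
                mul_le_mul_of_nonneg_right h1 h2
            _ ≤ (f a - f x) / 2 := by
                rw [div_mul_eq_mul_div, div_le_div_iff₀ (by positivity) (by norm_num)]
                nlinarith
        have : t * (f a - f a₀) ≤ t * |f a - f a₀| :=
          mul_le_mul_of_nonneg_left (le_abs_self _) ht0.le
        simp only [smul_eq_mul] at hlt
        nlinarith
      set η : ℝ := (hausdorffDist A B / s' + 1) / 2 with hηdef
      have hη1 : η < 1 := by
        have : hausdorffDist A B / s' < 1 := (div_lt_one hs'0).2 hds'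
        rw [hηdef]; linarith
      have hηd : hausdorffDist A B < η * s' := by
        have h1 : hausdorffDist A B / s' < η := by
          rw [hηdef]
          have : hausdorffDist A B / s' < 1 := (div_lt_one hs'0).2 hds'
          linarith
        calc hausdorffDist A B = hausdorffDist A B / s' * s' := by field_simp
          _ < η * s' := by exact mul_lt_mul_of_pos_right h1 hs'0
      have hη0 : 0 ≤ η := by
        have : 0 ≤ hausdorffDist A B / s' := by positivity
        rw [hηdef]; linarith
      obtain ⟨u₀, hu₀1, hu₀2⟩ := f.exists_lt_apply_of_lt_opNorm
        (r := η * ‖f‖) (by nlinarith)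
      obtain ⟨u, hu1, hu2⟩ : ∃ u : ℂ, ‖u‖ < 1 ∧ η * ‖f‖ < f u := by
        rcases le_or_gt (f u₀) 0 with h | h
        · refine ⟨-u₀, by simpa using hu₀1, ?_⟩
          rw [map_neg]
          rw [Real.norm_eq_abs, abs_of_nonpos h] at hu₀2
          linarith
        · refine ⟨u₀, hu₀1, ?_⟩
          rw [Real.norm_eq_abs, abs_of_pos h] at hu₀2
          linarith
      set p : ℂ := x + s' • u with hpdef
      have hpB : p ∈ B := by
        by_contra hp
        have h1 : s ≤ dist x p := infDist_le_dist_of_mem hp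
        have h2 : dist x p = s' * ‖u‖ := by
          rw [hpdef, dist_eq_norm]
          have : x - (x + s' • u) = (-s') • u := by rw [neg_smul]; abel
          rw [this, norm_smul, Real.norm_eq_abs, abs_neg, abs_of_pos hs'0]
        nlinarith
      have h1 : infDist p A ≤ hausdorffDist A B := by
        rw [hausdorffDist_comm]
        exact infDist_le_hausdorffDist_of_mem hpB
          (by unfold EMetric.hausdorffEdist at hfin; rwa [EMetric.hausdorffEdist_comm] at hfin)
      have h2 : η * s' ≤ infDist p A := by
        by_contra hcon2
        push_neg at hcon2
        obtain ⟨a, haA, hdist⟩ := (infDist_lt_iff ⟨a₀, interior_subset ha₀⟩).1 hcon2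
        have hfa := hfle a haA
        have hfp : f p = f x + s' * f u := by
          rw [hpdef, map_add, map_smul, smul_eq_mul]
        have hfdiff : f p - f a ≤ ‖f‖ * dist p a := by
          rw [dist_eq_norm]
          calc f p - f a ≤ |f p - f a| := le_abs_self _
            _ = ‖f (p - a)‖ := by rw [map_sub]; rfl
            _ ≤ ‖f‖ * ‖p - a‖ := f.le_opNorm _
        have : η * s' * ‖f‖ < s' * f u := by
          have := mul_lt_mul_of_pos_left hu2 hs'0
          nlinarith
        nlinarith [mul_lt_mul_of_pos_left hdist hfpos]
      linarith
    have hxcl : x ∉ closure Bᶜ := by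
      rw [closure_compl]
      simpa using hxB
    obtain ⟨y, hyf, hyd⟩ := exists_frontier_infDist isClosed_closure
      (hBcompl.mono subset_closure) hxcl
    have hyB : y ∈ frontier B := by
      have h1 : y ∈ frontier Bᶜ := frontier_closure_subset hyf
      rwa [frontier_compl] at h1
    calc infDist x (frontier B) ≤ dist x y := infDist_le_dist_of_mem hyB
      _ = infDist x (closure Bᶜ) := hyd
      _ = infDist x Bᶜ := infDist_closure
      _ ≤ hausdorffDist A B := hsd
  · have hxA : x ∈ A := by
      have := hx.1
      rwa [hAc.isClosed.closure_eq] at this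
    have h0 : infDist x B ≤ hausdorffDist A B := infDist_le_hausdorffDist_of_mem hxA hfin
    by_cases hxB2 : x ∈ B
    · have : x ∈ frontier B := ⟨subset_closure hxB2, hxB⟩
      rw [infDist_zero_of_mem this]
      exact hd0
    · obtain ⟨y, hyf, hyd⟩ := exists_frontier_infDist hBcl hBne hxB2
      calc infDist x (frontier B) ≤ dist x y := infDist_le_dist_of_mem hyf
        _ = infDist x B := hyd
        _ ≤ hausdorffDist A B := h0

lemma convex_infDist_le {t : Set ℂ} (ht : Convex ℝ t) (hne : t.Nonempty) (M : ℝ) :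
    Convex ℝ {x : ℂ | infDist x t ≤ M} := by
  intro x hx y hy a b ha hb hab
  simp only [mem_setOf_eq] at hx hy ⊢
  refine le_of_forall_pos_le_add fun ε hε => ?_
  obtain ⟨px, hpx, hdx⟩ := (infDist_lt_iff hne).1
    (show infDist x t < infDist x t + ε by linarith)
  obtain ⟨py, hpy, hdy⟩ := (infDist_lt_iff hne).1
    (show infDist y t < infDist y t + ε by linarith)
  have hq : a • px + b • py ∈ t := ht hpx hpy ha hb hab
  have hd : dist (a • x + b • y) (a • px + b • py) ≤ a * dist x px + b * dist y py := by
    rw [dist_eq_norm]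
    have : a • x + b • y - (a • px + b • py) = a • (x - px) + b • (y - py) := by
      rw [smul_sub, smul_sub]; abel
    rw [this]
    calc ‖a • (x - px) + b • (y - py)‖ ≤ ‖a • (x - px)‖ + ‖b • (y - py)‖ := norm_add_le _ _
      _ = a * dist x px + b * dist y py := by
          rw [norm_smul, norm_smul, Real.norm_eq_abs, Real.norm_eq_abs,
            abs_of_nonneg ha, abs_of_nonneg hb, dist_eq_norm, dist_eq_norm]
  calc infDist (a • x + b • y) t ≤ dist (a • x + b • y) (a • px + b • py) :=
        infDist_le_dist_of_mem hq
    _ ≤ a * dist x px + b * dist y py := hd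
    _ ≤ a * (infDist x t + ε) + b * (infDist y t + ε) := by
        exact add_le_add (mul_le_mul_of_nonneg_left hdx.le ha)
          (mul_le_mul_of_nonneg_left hdy.le hb)
    _ = a * infDist x t + b * infDist y t + (a + b) * ε := by ring
    _ ≤ M + ε := by
        have h1 : a * infDist x t ≤ a * M := mul_le_mul_of_nonneg_left hx ha
        have h2 : b * infDist y t ≤ b * M := mul_le_mul_of_nonneg_left hy hb
        have h3 : a * M + b * M = M := by rw [← add_mul, hab, one_mul]
        rw [hab, one_mul]
        linarith

lemma interior_nonempty_of_volume_one {S : Set ℂ} (hS : Convex ℝ S)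
    (hvol : MeasureTheory.volume S = 1) : (interior S).Nonempty := by
  by_contra h
  rw [Set.not_nonempty_iff_eq_empty] at h
  have hsp : affineSpan ℝ S ≠ ⊤ := by
    intro htop
    rw [← hS.interior_nonempty_iff_affineSpan_eq_top] at htop
    rw [h] at htop
    exact Set.not_nonempty_empty htop
  have h0 : MeasureTheory.volume S = 0 :=
    MeasureTheory.measure_mono_null (subset_affineSpan ℝ S)
      (MeasureTheory.Measure.addHaar_affineSubspace _ _ hsp)
  rw [hvol] at h0
  exact one_ne_zero h0

end Aux

/-- Vertex estimate (estimate (bene -1)): let `Π` be a convex unit-area `n`-gon with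
vertices `v i` and barycenter at the origin, `Π₀` the unit-area regular `n`-gon with
vertices `w i = r·e^{2πik/n}`, `max_i |v i − w i| < ε`, `v 0 = λ₀·w 0` with `λ₀ > 0`,
and for each `i` let `θ i` be the angle of a rotation `ρᵢ` about the origin with
`ρᵢ(v i) = λᵢ·w i`, `λᵢ > 0`. Then
`hd(∂Π, ∂Π₀) ≤ C · ∑ᵢ (rᵢ·|θᵢ| + |rᵢ − r|)` where `rᵢ = |v i|`,
for constants `C, ε` depending only on `n`. -/
theorem hexagon_vertex_hausdorff_estimate (n : ℕ) [NeZero n] (hn : 3 ≤ n) :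
    ∃ C > (0 : ℝ), ∃ ε > (0 : ℝ),
      ∀ (v w : Fin n → ℂ) (r : ℝ) (θ lam : Fin n → ℝ),
        0 < r →
        (∀ i : Fin n, w i = (r : ℂ) * Complex.exp (2 * π * (i : ℕ) / n * Complex.I)) →
        MeasureTheory.volume (convexHull ℝ (Set.range v)) = 1 →
        MeasureTheory.volume (convexHull ℝ (Set.range w)) = 1 →
        (∀ i, ‖v i - w i‖ < ε) →
        0 < lam 0 → v 0 = (lam 0 : ℂ) * w 0 →
        (∀ i, 0 < lam i) →
        (∀ i, rotBy (θ i) (v i) = (lam i : ℂ) * w i) →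
        θ 0 = 0 →
        Metric.hausdorffDist (frontier (convexHull ℝ (Set.range v)))
            (frontier (convexHull ℝ (Set.range w)))
          ≤ C * ∑ i, (‖v i‖ * |θ i| + |‖v i‖ - r|) := by
  refine ⟨1, one_pos, 1, one_pos, ?_⟩
  intro v w r θ lam hr hw hvolv hvolw hvw hlam0 hv0 hlam hrot hθ0
  set A := convexHull ℝ (Set.range v) with hA
  set B := convexHull ℝ (Set.range w) with hB
  have hAconv : Convex ℝ A := convex_convexHull ℝ _
  have hBconv : Convex ℝ B := convex_convexHull ℝ _
  have hAc : IsCompact A := (Set.finite_range v).isCompact_convexHull ℝ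
  have hBc : IsCompact B := (Set.finite_range w).isCompact_convexHull ℝ
  have i₀ : Fin n := ⟨0, by omega⟩
  have hAne : A.Nonempty := ⟨v i₀, subset_convexHull ℝ _ (Set.mem_range_self i₀)⟩
  have hBne : B.Nonempty := ⟨w i₀, subset_convexHull ℝ _ (Set.mem_range_self i₀)⟩
  have hAint : (interior A).Nonempty := interior_nonempty_of_volume_one hAconv hvolv
  have hBint : (interior B).Nonempty := interior_nonempty_of_volume_one hBconv hvolw
  have hfin : EMetric.hausdorffEdist A B ≠ ⊤ :=
    Metric.hausdorffEdist_ne_top_of_nonempty_of_bounded hAne hBne hAc.isBounded hBc.isBounded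
  -- key per-vertex estimate
  have hwnorm : ∀ i, ‖w i‖ = r := by
    intro i
    rw [hw i, norm_mul, Complex.norm_real, Real.norm_eq_abs, abs_of_pos hr]
    have : (2 * (π : ℂ) * ((i : ℕ) : ℂ) / (n : ℂ)) = ((2 * π * (i : ℕ) / n : ℝ) : ℂ) := by
      push_cast; ring
    rw [this, Complex.norm_exp_ofReal_mul_I, mul_one]
  have hkey : ∀ i, ‖v i - w i‖ ≤ ‖v i‖ * |θ i| + |‖v i‖ - r| := by
    intro i
    have hri := hrot i
    simp only [rotBy] at hri
    have hnv : ‖v i‖ = lam i * r := by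
      have h := congrArg norm hri
      rw [norm_mul, norm_mul, Complex.norm_exp_ofReal_mul_I, one_mul, Complex.norm_real,
        Real.norm_eq_abs, abs_of_pos (hlam i), hwnorm i] at h
      exact h
    have h1 : ‖v i - (lam i : ℂ) * w i‖ ≤ ‖v i‖ * |θ i| := by
      rw [← hri]
      have he : v i - Complex.exp ((θ i : ℂ) * Complex.I) * v i
          = -(Complex.exp ((θ i : ℂ) * Complex.I) - 1) * v i := by ring
      rw [he, norm_mul, norm_neg]
      calc ‖Complex.exp ((θ i : ℂ) * Complex.I) - 1‖ * ‖v i‖ ≤ |θ i| * ‖v i‖ :=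
            mul_le_mul_of_nonneg_right (norm_exp_mul_I_sub_one_le (θ i)) (norm_nonneg _)
        _ = ‖v i‖ * |θ i| := mul_comm _ _
    have h2 : ‖(lam i : ℂ) * w i - w i‖ = |‖v i‖ - r| := by
      have he : (lam i : ℂ) * w i - w i = ((lam i - 1 : ℝ) : ℂ) * w i := by push_cast; ring
      rw [he, norm_mul, Complex.norm_real, Real.norm_eq_abs, hwnorm i, hnv]
      rw [← abs_of_pos hr, ← abs_mul]
      congr 1
      rw [abs_of_pos hr]
      ring
    calc ‖v i - w i‖ = dist (v i) (w i) := (dist_eq_norm _ _).symm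
      _ ≤ dist (v i) ((lam i : ℂ) * w i) + dist ((lam i : ℂ) * w i) (w i) := dist_triangle _ _ _
      _ = ‖v i - (lam i : ℂ) * w i‖ + ‖(lam i : ℂ) * w i - w i‖ := by
          rw [dist_eq_norm, dist_eq_norm]
      _ ≤ ‖v i‖ * |θ i| + |‖v i‖ - r| := by rw [h2]; exact add_le_add_left h1 _
  set M : ℝ := ∑ i, (‖v i‖ * |θ i| + |‖v i‖ - r|) with hM
  have hterm0 : ∀ i : Fin n, 0 ≤ ‖v i‖ * |θ i| + |‖v i‖ - r| := fun i =>
    add_nonneg (mul_nonneg (norm_nonneg _) (abs_nonneg _)) (abs_nonneg _)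
  have hM0 : 0 ≤ M := Finset.sum_nonneg fun i _ => hterm0 i
  have hterm_le : ∀ i, ‖v i - w i‖ ≤ M := fun i =>
    (hkey i).trans (Finset.single_le_sum (fun j _ => hterm0 j) (Finset.mem_univ i))
  -- Hausdorff distance between the hulls
  have hAB : Metric.hausdorffDist A B ≤ M := by
    apply Metric.hausdorffDist_le_of_infDist hM0
    · intro x hx
      have hsub : A ⊆ {x : ℂ | Metric.infDist x B ≤ M} := by
        apply convexHull_min ?_ (convex_infDist_le hBconv hBne M)
        rintro _ ⟨i, rfl⟩
        refine le_trans (Metric.infDist_le_dist_of_mem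
          (subset_convexHull ℝ _ (Set.mem_range_self i))) ?_
        rw [dist_eq_norm]
        exact hterm_le i
      exact hsub hx
    · intro x hx
      have hsub : B ⊆ {x : ℂ | Metric.infDist x A ≤ M} := by
        apply convexHull_min ?_ (convex_infDist_le hAconv hAne M)
        rintro _ ⟨i, rfl⟩
        refine le_trans (Metric.infDist_le_dist_of_mem
          (subset_convexHull ℝ _ (Set.mem_range_self i))) ?_
        rw [dist_eq_norm, norm_sub_rev]
        exact hterm_le i
      exact hsub hx
  -- frontier Hausdorff distance bounded by hull Hausdorff distance
  have hfront : Metric.hausdorffDist (frontier A) (frontier B) ≤ Metric.hausdorffDist A B := by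
    apply Metric.hausdorffDist_le_of_infDist Metric.hausdorffDist_nonneg
    · intro x hx
      exact infDist_frontier_le_hausdorffDist hAconv hAc hAint hBc hBne hfin hx
    · intro x hx
      have := infDist_frontier_le_hausdorffDist hBconv hBc hBint hAc hAne
        (by unfold EMetric.hausdorffEdist at hfin ⊢; rwa [EMetric.hausdorffEdist_comm] at hfin) hx
      rwa [Metric.hausdorffDist_comm] at this
  rw [one_mul]
  exact hfront.trans hAB
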